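/- For every fixed z > 0, the function ν ↦ K_ν(z) is log-convex on ℝ; that is, ν ↦ log K_ν(z) is a convex function of ν. In particular, K_{(μ+ν)/2}(z)² ≤ K_μ(z) · K_ν(z) for all real μ, ν. -/

import Mathlib

open Filter Set MeasureTheory Real
open scoped ENNReal

lemma besselK_integrand_integrableOn {z : ℝ} (hz : 0 < z) (ν : ℝ) :
    IntegrableOn (fun t : ℝ => t ^ (ν - 1) * Real.exp (-z * (t + 1 / t) / 2)) (Ioi 0) := by
  set F : ℝ → ℝ := fun t => t ^ (ν - 1) * Real.exp (-z * (t + 1 / t) / 2) with hF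
  have meas : ∀ s : Set ℝ, s ⊆ Ioi 0 → MeasurableSet s →
      AEStronglyMeasurable F (volume.restrict s) := by
    intro s hs hms
    refine ContinuousOn.aestronglyMeasurable ?_ hms
    refine ContinuousOn.mul ?_ ?_
    · exact fun x hx => ((continuousAt_rpow_const _ _ (Or.inl (hs hx).ne')).continuousWithinAt)
    · refine Real.continuous_exp.comp_continuousOn ?_
      refine ContinuousOn.div_const ?_ 2
      refine continuousOn_const.mul (continuousOn_id.add ?_)
      exact continuousOn_const.div continuousOn_id (fun x hx => (hs hx).ne')
  have key : Ioc (0:ℝ) 1 ∪ Ioi 1 = Ioi 0 := Ioc_union_Ioi_eq_Ioi zero_le_one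
  rw [← key]
  apply IntegrableOn.union
  · -- near 0
    set n : ℕ := ⌈-ν⌉₊ + 1 with hn
    have hnν : -ν < (n : ℝ) := by
      calc -ν ≤ (⌈-ν⌉₊ : ℝ) := Nat.le_ceil _
      _ < n := by rw [hn]; push_cast; linarith
    set C : ℝ := (n.factorial : ℝ) * (2 / z) ^ n with hC
    have hCpos : 0 < C := by positivity
    refine Integrable.mono' (g := fun t => C * t ^ (ν - 1 + n))
      ?_ (meas _ (Ioc_subset_Ioi_self) measurableSet_Ioc) ?_
    · refine Integrable.const_mul ?_ _
      have : IntervalIntegrable (fun t : ℝ => t ^ (ν - 1 + n)) volume 0 1 :=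
        intervalIntegral.intervalIntegrable_rpow' (by linarith)
      rw [intervalIntegrable_iff_integrableOn_Ioc_of_le zero_le_one] at this
      exact this
    · rw [ae_restrict_iff' measurableSet_Ioc]
      refine ae_of_all _ fun t ht => ?_
      obtain ⟨ht0, ht1⟩ := ht
      have hFt : 0 ≤ F t := mul_nonneg (rpow_nonneg ht0.le _) (Real.exp_pos _).le
      rw [Real.norm_of_nonneg hFt]
      have h1 : Real.exp (-z * (t + 1 / t) / 2) ≤ Real.exp (-(z / (2 * t))) := by
        apply Real.exp_le_exp.2
        have he : -z * (t + 1 / t) / 2 = -(z * t / 2) - z / (2 * t) := by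
          field_simp
          ring
        have hzt : 0 < z * t / 2 := by positivity
        rw [he]
        linarith
      have h2 : Real.exp (-(z / (2 * t))) ≤ C * t ^ (n : ℕ) := by
        rw [Real.exp_neg]
        rw [inv_le_iff_one_le_mul₀ (Real.exp_pos _)]
        have hx : (0:ℝ) ≤ z / (2 * t) := by positivity
        have := Real.pow_div_factorial_le_exp _ hx n
        calc (1:ℝ) = ((z / (2*t))^n / n.factorial) * ((n.factorial : ℝ) * (2*t/z)^n) := by
              rw [← mul_assoc, div_mul_cancel₀ _ (by positivity), ← mul_pow, div_mul_div_comm,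
                mul_comm z (2*t), div_self (by positivity), one_pow]
          _ ≤ Real.exp (z / (2*t)) * ((n.factorial : ℝ) * (2*t/z)^n) := by
              apply mul_le_mul_of_nonneg_right this (by positivity)
          _ = (C * t ^ n) * Real.exp (z / (2*t)) := by
              rw [hC]
              rw [div_pow, div_pow, mul_pow]
              ring
      calc F t = t ^ (ν - 1) * Real.exp (-z * (t + 1 / t) / 2) := rfl
        _ ≤ t ^ (ν - 1) * (C * t ^ (n:ℕ)) :=
            mul_le_mul_of_nonneg_left (h1.trans h2) (rpow_nonneg ht0.le _)
        _ = C * t ^ (ν - 1 + n) := by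
            rw [Real.rpow_add ht0, Real.rpow_natCast]; ring
  · -- tail
    set q : ℝ := max (ν - 1) 0 with hq
    refine Integrable.mono' (g := fun t => t ^ q * Real.exp (-(z/2) * t))
      ?_ (meas _ (fun x hx => mem_Ioi.mpr (lt_trans one_pos (mem_Ioi.mp hx))) measurableSet_Ioi) ?_
    · have : IntegrableOn (fun t : ℝ => t ^ q * Real.exp (-(z/2) * t ^ (1:ℝ))) (Ioi 0) :=
        integrableOn_rpow_mul_exp_neg_mul_rpow (lt_of_lt_of_le (by norm_num) (le_max_right (ν-1) 0)) zero_lt_one (by positivity)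
      refine ((this.mono_set (Ioi_subset_Ioi zero_le_one)).congr_fun (fun x hx => ?_)
        measurableSet_Ioi)
      simp only [Real.rpow_one]
    · rw [ae_restrict_iff' measurableSet_Ioi]
      refine ae_of_all _ fun t ht => ?_
      have ht1 : (1:ℝ) < t := ht
      have ht0 : (0:ℝ) < t := lt_trans one_pos ht1
      have hFt : 0 ≤ F t := mul_nonneg (rpow_nonneg ht0.le _) (Real.exp_pos _).le
      rw [Real.norm_of_nonneg hFt]
      have h1 : t ^ (ν - 1) ≤ t ^ q :=
        Real.rpow_le_rpow_of_exponent_le ht1.le (le_max_left _ _)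
      have h2 : Real.exp (-z * (t + 1 / t) / 2) ≤ Real.exp (-(z/2) * t) := by
        apply Real.exp_le_exp.2
        have h3 : 0 < 1 / t := by positivity
        nlinarith
      exact mul_le_mul h1 h2 (Real.exp_pos _).le (rpow_nonneg ht0.le _)

/-- The modified Bessel function of the second kind,
`K_ν(z) = (1/2) ∫_0^∞ t^{ν-1} exp(-z(t + 1/t)/2) dt`. -/
noncomputable def besselK (ν z : ℝ) : ℝ :=
  (1 / 2) * ∫ t in Set.Ioi (0 : ℝ), t ^ (ν - 1) * Real.exp (-z * (t + 1 / t) / 2)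

lemma besselK_pos {z : ℝ} (hz : 0 < z) (ν : ℝ) : 0 < besselK ν z := by
  rw [besselK]
  have hI : 0 < ∫ t in Ioi (0:ℝ), t ^ (ν - 1) * Real.exp (-z * (t + 1 / t) / 2) := by
    rw [setIntegral_pos_iff_support_of_nonneg_ae]
    · refine lt_of_lt_of_le ?_ (measure_mono (s := Ioi (1:ℝ)) ?_)
      · simp
      · intro x hx
        have hx1 : (1:ℝ) < x := hx
        have hx0 : (0:ℝ) < x := lt_trans one_pos hx1
        exact ⟨(mul_pos (rpow_pos_of_pos hx0 _) (Real.exp_pos _)).ne', hx0⟩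
    · filter_upwards [ae_restrict_mem measurableSet_Ioi] with t ht
      exact mul_nonneg (rpow_nonneg (le_of_lt ht) _) (Real.exp_pos _).le
    · exact besselK_integrand_integrableOn hz ν
  linarith

lemma besselK_holder {z : ℝ} (hz : 0 < z) {a b μ ν : ℝ} (ha : 0 < a) (hb : 0 < b)
    (hab : a + b = 1) :
    besselK (a * μ + b * ν) z ≤ besselK μ z ^ a * besselK ν z ^ b := by
  let f : ℝ → ℝ → ℝ → ℝ := fun c u x => x ^ (c * (u - 1)) * Real.exp (-z * (x + 1 / x) / 2 * c)
  have e : Real.HolderConjugate (1 / a) (1 / b) := Real.holderConjugate_one_div ha hb hab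
  have posf : ∀ c u x : ℝ, x ∈ Ioi (0 : ℝ) → 0 ≤ f c u x := fun c u x hx =>
    mul_nonneg (rpow_nonneg (le_of_lt hx) _) (Real.exp_pos _).le
  have posf' : ∀ c u : ℝ, ∀ᵐ x : ℝ ∂volume.restrict (Ioi 0), 0 ≤ f c u x := fun c u =>
    (ae_restrict_iff' measurableSet_Ioi).mpr (ae_of_all _ (posf c u))
  have fpow : ∀ {c x : ℝ}, 0 < c → ∀ u : ℝ, 0 < x →
      x ^ (u - 1) * Real.exp (-z * (x + 1 / x) / 2) = f c u x ^ (1 / c) := by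
    intro c x hc u hx
    dsimp only [f]
    rw [Real.mul_rpow (rpow_nonneg hx.le _) (Real.exp_pos _).le, ← Real.exp_mul,
      ← Real.rpow_mul hx.le]
    congr 2 <;> field_simp <;> ring
  have f_mem_Lp : ∀ {c u : ℝ}, 0 < c →
      MemLp (f c u) (ENNReal.ofReal (1 / c)) (volume.restrict (Ioi 0)) := by
    intro c u hc
    have A : ENNReal.ofReal (1 / c) ≠ 0 := by
      rwa [Ne, ENNReal.ofReal_eq_zero, not_le, one_div_pos]
    have B : ENNReal.ofReal (1 / c) ≠ ∞ := ENNReal.ofReal_ne_top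
    rw [← memLp_norm_rpow_iff _ A B, ENNReal.toReal_ofReal (one_div_nonneg.mpr hc.le),
      ENNReal.div_self A B, memLp_one_iff_integrable]
    · apply Integrable.congr (besselK_integrand_integrableOn hz u)
      refine eventuallyEq_of_mem (self_mem_ae_restrict measurableSet_Ioi) fun x hx => ?_
      rw [fpow hc u hx]
      congr 1
      exact (norm_of_nonneg (posf _ _ x hx)).symm
    · refine ContinuousOn.aestronglyMeasurable ?_ measurableSet_Ioi
      refine ContinuousOn.mul
        (fun x hx => (continuousAt_rpow_const _ _ (Or.inl (mem_Ioi.mp hx).ne')).continuousWithinAt)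
        ?_
      refine Real.continuous_exp.comp_continuousOn ?_
      refine ContinuousOn.mul (ContinuousOn.div_const ?_ 2) continuousOn_const
      exact continuousOn_const.mul (continuousOn_id.add
        (continuousOn_const.div continuousOn_id (fun x hx => (mem_Ioi.mp hx).ne')))
  have hI : (∫ t in Ioi (0:ℝ), t ^ (a * μ + b * ν - 1) * Real.exp (-z * (t + 1 / t) / 2))
      ≤ (∫ t in Ioi (0:ℝ), t ^ (μ - 1) * Real.exp (-z * (t + 1 / t) / 2)) ^ a *
        (∫ t in Ioi (0:ℝ), t ^ (ν - 1) * Real.exp (-z * (t + 1 / t) / 2)) ^ b := by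
    convert MeasureTheory.integral_mul_le_Lp_mul_Lq_of_nonneg e (posf' a μ) (posf' b ν)
      (f_mem_Lp ha) (f_mem_Lp hb) using 1
    · refine setIntegral_congr_fun measurableSet_Ioi fun x hx => ?_
      dsimp only [f]
      have hx0 : (0:ℝ) < x := hx
      have A : Real.exp (-z * (x + 1 / x) / 2) =
          Real.exp (-z * (x + 1 / x) / 2 * a) * Real.exp (-z * (x + 1 / x) / 2 * b) := by
        rw [← Real.exp_add, ← mul_add, hab, mul_one]
      have B : x ^ (a * μ + b * ν - 1) = x ^ (a * (μ - 1)) * x ^ (b * (ν - 1)) := by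
        rw [← Real.rpow_add hx0]
        congr 1
        linarith [mul_add a μ 1]
      rw [A, B]
      ring
    · rw [one_div_one_div, one_div_one_div]
      congr 2 <;> exact setIntegral_congr_fun measurableSet_Ioi fun x hx =>
        fpow (by assumption) _ hx
  have hμ0 : (0:ℝ) ≤ ∫ t in Ioi (0:ℝ), t ^ (μ - 1) * Real.exp (-z * (t + 1 / t) / 2) := by
    have := besselK_pos hz μ
    rw [besselK] at this
    linarith
  have hν0 : (0:ℝ) ≤ ∫ t in Ioi (0:ℝ), t ^ (ν - 1) * Real.exp (-z * (t + 1 / t) / 2) := by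
    have := besselK_pos hz ν
    rw [besselK] at this
    linarith
  rw [besselK, besselK, besselK, Real.mul_rpow (by norm_num) hμ0,
    Real.mul_rpow (by norm_num) hν0]
  have h2 : ((1:ℝ)/2) ^ a * ((1:ℝ)/2) ^ b = 1/2 := by
    rw [← Real.rpow_add (by norm_num : (0:ℝ) < 1/2), hab, Real.rpow_one]
  calc (1:ℝ)/2 * ∫ t in Ioi (0:ℝ), t ^ (a * μ + b * ν - 1) * Real.exp (-z * (t + 1 / t) / 2)
        ≤ 1/2 * ((∫ t in Ioi (0:ℝ), t ^ (μ - 1) * Real.exp (-z * (t + 1 / t) / 2)) ^ a *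
          (∫ t in Ioi (0:ℝ), t ^ (ν - 1) * Real.exp (-z * (t + 1 / t) / 2)) ^ b) := by
          linarith
      _ = (1/2) ^ a * (∫ t in Ioi (0:ℝ), t ^ (μ - 1) * Real.exp (-z * (t + 1 / t) / 2)) ^ a *
          ((1/2) ^ b * (∫ t in Ioi (0:ℝ), t ^ (ν - 1) * Real.exp (-z * (t + 1 / t) / 2)) ^ b) := by
          rw [show ∀ p q r s : ℝ, p * q * (r * s) = p * r * (q * s) from fun p q r s => by ring,
            h2]


theorem stmt_18 (z : ℝ) (hz : 0 < z) :
    ConvexOn ℝ Set.univ (fun ν : ℝ => Real.log (besselK ν z)) ∧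
      ∀ μ ν : ℝ, besselK ((μ + ν) / 2) z ^ 2 ≤ besselK μ z * besselK ν z := by
  constructor
  · refine convexOn_iff_forall_pos.mpr ⟨convex_univ, fun x _ y _ a b ha hb hab => ?_⟩
    simp only [smul_eq_mul]
    rw [← Real.log_rpow (besselK_pos hz x), ← Real.log_rpow (besselK_pos hz y),
      ← Real.log_mul (Real.rpow_pos_of_pos (besselK_pos hz x) a).ne'
        (Real.rpow_pos_of_pos (besselK_pos hz y) b).ne']
    exact Real.log_le_log (besselK_pos hz _) (besselK_holder hz ha hb hab)
  · intro μ ν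
    have h : besselK ((μ + ν) / 2) z ≤ besselK μ z ^ (1/2 : ℝ) * besselK ν z ^ (1/2 : ℝ) := by
      have := besselK_holder hz (μ := μ) (ν := ν) one_half_pos one_half_pos (by norm_num)
      rwa [show (1/2 : ℝ) * μ + (1/2 : ℝ) * ν = (μ + ν) / 2 by ring] at this
    have e : ∀ x : ℝ, 0 ≤ x → (x ^ (1/2 : ℝ)) ^ 2 = x := fun x hx => by
      rw [← Real.rpow_natCast (x ^ (1/2 : ℝ)) 2, ← Real.rpow_mul hx]
      norm_num
    calc besselK ((μ + ν) / 2) z ^ 2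
        ≤ (besselK μ z ^ (1/2 : ℝ) * besselK ν z ^ (1/2 : ℝ)) ^ 2 :=
          pow_le_pow_left₀ (besselK_pos hz _).le h 2
      _ = besselK μ z * besselK ν z := by
          rw [mul_pow, e _ (besselK_pos hz μ).le, e _ (besselK_pos hz ν).le]
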